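/- With notation as in the structure theory of an indecomposable non-simple quadratic Lie super algebra g = a ⊕ h ⊕ I of degree δ, the map σ : a → gl(I) (defined by σ(x)(α) = [x,α]) is a representation of (a, [·,·]_a) on I, isomorphic to the δ-coadjoint representation ad*_δ : a → gl(P_δ(a)*) via ξ_δ: that is, ξ_δ ∘ σ(x) = ad*_δ(x) ∘ ξ_δ for all x ∈ a. -/
import Mathlib


/-- The sign `(-1)^{ij}` for `i j : ZMod 2`. -/
def sgn (F : Type*) [Field F] (i j : ZMod 2) : F := (-1) ^ (i * j).val

/-- The orthogonal `J^⊥ = {w : B(j, w) = 0 for all j ∈ J}` of a subspace with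
respect to a bilinear form `B`. -/
def orth {F V : Type*} [Field F] [AddCommGroup V] [Module F V]
    (B : V →ₗ[F] V →ₗ[F] F) (J : Submodule F V) : Submodule F V where
  carrier := {w | ∀ j ∈ J, B j w = 0}
  add_mem' := by
    intro w w' hw hw' j hj
    simp [hw j hj, hw' j hj]
  zero_mem' := by
    intro j hj
    simp
  smul_mem' := by
    intro c w hw j hj
    simp [hw j hj]

/-- in the decomposition `g = aa ⊕ hh ⊕ I`, the map
`σ : aa → gl(I)`, `σ(x)(α) = [x, α]`, is a representation of `(aa, [·,·]_a)` on `I`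
isomorphic to the δ-coadjoint representation via `ξ_δ` (where
`ξ_δ(α)(P_δ y) = B(α, y)`): concretely `ξ_δ ∘ σ(x) = ad*_δ(x) ∘ ξ_δ`, i.e.
`B([x,α], y) = -(-1)^{|α||x|} B(α, [x,y]_a)` for homogeneous `x ∈ aa`, `α ∈ I`
and all `y ∈ aa`. -/
theorem sigma_is_coadjoint
    (F V : Type*) [Field F] [IsAlgClosed F] [CharZero F]
    [AddCommGroup V] [Module F V] [FiniteDimensional F V]
    (g : ZMod 2 → Submodule F V) (hg : DirectSum.IsInternal g)
    (br : V →ₗ[F] V →ₗ[F] V)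
    -- `(g, [·,·])` is a Lie super algebra
    (hbr_even : ∀ i j : ZMod 2, ∀ x y : V, x ∈ g i → y ∈ g j → br x y ∈ g (i + j))
    (hbr_skew : ∀ i j : ZMod 2, ∀ x y : V, x ∈ g i → y ∈ g j →
      br x y = -(sgn F i j) • br y x)
    (hbr_jac : ∀ i j k : ZMod 2, ∀ x y z : V, x ∈ g i → y ∈ g j → z ∈ g k →
      sgn F i k • br x (br y z) + sgn F j i • br y (br z x)
        + sgn F k j • br z (br x y) = 0)
    -- `B` is an invariant metric of degree `δ`
    (δ : ZMod 2) (B : V →ₗ[F] V →ₗ[F] F)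
    (hB_symm : ∀ i j : ZMod 2, ∀ x y : V, x ∈ g i → y ∈ g j →
      B x y = sgn F i j * B y x)
    (hB_inv : ∀ x y z : V, B (br x y) z = B x (br y z))
    (hB_nd : ∀ x : V, (∀ y : V, B x y = 0) → x = 0)
    (hB_deg : ∀ i j : ZMod 2, ∀ x y : V, x ∈ g i → y ∈ g j → i + j ≠ δ → B x y = 0)
    -- `g` is non-simple of dimension `> 1`
    (hdim : 1 < Module.finrank F V)
    (hns : ∃ J : Submodule F V, (∀ x : V, ∀ v ∈ J, br x v ∈ J) ∧
      J = (J ⊓ g 0) ⊔ (J ⊓ g 1) ∧ J ≠ ⊥ ∧ J ≠ ⊤)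
    -- `g` is indecomposable
    (hind : ¬ ∃ J : Submodule F V, (∀ x : V, ∀ v ∈ J, br x v ∈ J) ∧
      J = (J ⊓ g 0) ⊔ (J ⊓ g 1) ∧ J ≠ ⊥ ∧ J ≠ ⊤ ∧ IsCompl J (orth B J))
    -- `I` is a minimal graded ideal, contained in `I^⊥` and abelian
    (I : Submodule F V)
    (hI_ideal : ∀ x : V, ∀ v ∈ I, br x v ∈ I)
    (hI_graded : I = (I ⊓ g 0) ⊔ (I ⊓ g 1))
    (hI_ne : I ≠ ⊥)
    (hI_min : ∀ J : Submodule F V, (∀ x : V, ∀ v ∈ J, br x v ∈ J) →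
      J = (J ⊓ g 0) ⊔ (J ⊓ g 1) → J ≤ I → J = ⊥ ∨ J = I)
    (hI_deg : I ≤ orth B I)
    -- graded complements: `I^⊥ = hh ⊕ I`, `hh^⊥ = aa ⊕ I`, `aa` isotropic,
    -- `g = aa ⊕ hh ⊕ I`, and `[I, I^⊥] = 0`
    (hh aa : Submodule F V)
    (hhh_graded : hh = (hh ⊓ g 0) ⊔ (hh ⊓ g 1))
    (haa_graded : aa = (aa ⊓ g 0) ⊔ (aa ⊓ g 1))
    (hIperp : hh ⊔ I = orth B I)
    (hhhperp : aa ⊔ I = orth B hh)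
    (haa_iso : ∀ x ∈ aa, ∀ y ∈ aa, B x y = 0)
    (hdisj1 : Disjoint hh I)
    (hdisj2 : Disjoint aa (hh ⊔ I))
    (hsum : aa ⊔ (hh ⊔ I) = ⊤)
    (hcentral : ∀ α ∈ I, ∀ w ∈ hh ⊔ I, br α w = 0)
    -- components of the bracket with respect to `g = aa ⊕ hh ⊕ I`
    (bra lam mu rho tau brh gam : V →ₗ[F] V →ₗ[F] V)
    (hcomp_a : ∀ x ∈ aa, ∀ y ∈ aa, br x y = bra x y + lam x y + mu x y ∧
      bra x y ∈ aa ∧ lam x y ∈ hh ∧ mu x y ∈ I)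
    (hcomp_ah : ∀ x ∈ aa, ∀ u ∈ hh, br x u = rho x u + tau x u ∧
      rho x u ∈ hh ∧ tau x u ∈ I)
    (hcomp_h : ∀ u ∈ hh, ∀ v ∈ hh, br u v = brh u v + gam u v ∧
      brh u v ∈ hh ∧ gam u v ∈ I)
    (hcomp_aI : ∀ x ∈ aa, ∀ α ∈ I, br x α ∈ I)
    :
    -- `σ` is a representation of `(aa, [·,·]_a)` on `I`
    (∀ i j : ZMod 2, ∀ x y : V, x ∈ aa → x ∈ g i → y ∈ aa → y ∈ g j →
      ∀ α ∈ I, br (bra x y) α = br x (br y α) - sgn F i j • br y (br x α)) ∧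
    -- `ξ_δ ∘ σ(x) = ad*_δ(x) ∘ ξ_δ`
    (∀ i d : ZMod 2, ∀ x α : V, x ∈ aa → x ∈ g i → α ∈ I → α ∈ g d →
      ∀ y ∈ aa, B (br x α) y = -(sgn F d i) * B α (bra x y)) := by
  -- `[w, α] = 0` for `w ∈ hh ⊔ I` and `α ∈ I` homogeneous
  have zc : ∀ a : ZMod 2, a = 0 ∨ a = 1 := by decide
  have lemB : ∀ w ∈ hh ⊔ I, ∀ k : ZMod 2, ∀ α ∈ I, α ∈ g k → br w α = 0 := by
    intro w hw k α hα hαk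
    obtain ⟨u, hu, v, hv, rfl⟩ := Submodule.mem_sup.mp hw
    rw [hhh_graded] at hu
    rw [hI_graded] at hv
    obtain ⟨u0, hu0, u1, hu1, rfl⟩ := Submodule.mem_sup.mp hu
    obtain ⟨v0, hv0, v1, hv1, rfl⟩ := Submodule.mem_sup.mp hv
    have key : ∀ d : ZMod 2, ∀ w : V, w ∈ hh ⊔ I → w ∈ g d → br w α = 0 := by
      intro d w hwm hwd
      simp [hbr_skew d k w α hwd hαk, hcentral α hα w hwm]
    have h0 : br u0 α = 0 := key 0 u0
      (Submodule.mem_sup_left hu0.1) hu0.2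
    have h1 : br u1 α = 0 := key 1 u1
      (Submodule.mem_sup_left hu1.1) hu1.2
    have h2 : br v0 α = 0 := key 0 v0
      (Submodule.mem_sup_right hv0.1) hv0.2
    have h3 : br v1 α = 0 := key 1 v1
      (Submodule.mem_sup_right hv1.1) hv1.2
    simp [map_add, LinearMap.add_apply, h0, h1, h2, h3]
  -- part 1 for homogeneous `α`
  have part1h : ∀ i j k : ZMod 2, ∀ x y : V, x ∈ aa → x ∈ g i → y ∈ aa → y ∈ g j →
      ∀ α ∈ I, α ∈ g k →
      br (bra x y) α = br x (br y α) - sgn F i j • br y (br x α) := by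
    intro i j k x y hxa hxi hya hyj α hα hαk
    obtain ⟨heq, hbra, hlam, hmu⟩ := hcomp_a x hxa y hya
    have h1 : br α x = -(sgn F k i) • br x α := hbr_skew k i α x hαk hxi
    have h2 : br α (br x y) = -(sgn F k (i + j)) • br (br x y) α :=
      hbr_skew k (i + j) α (br x y) hαk (hbr_even i j x y hxi hyj)
    have h3 : br (br x y) α = br (bra x y) α := by
      have hl : br (lam x y) α = 0 :=
        lemB (lam x y) (Submodule.mem_sup_left hlam) k α hα hαk
      have hm : br (mu x y) α = 0 :=
        lemB (mu x y) (Submodule.mem_sup_right hmu) k α hα hαk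
      rw [heq]
      simp [map_add, LinearMap.add_apply, hl, hm]
    have hjac := hbr_jac i j k x y α hxi hyj hαk
    have final : br (bra x y) α - (br x (br y α) - sgn F i j • br y (br x α)) =
        (-(sgn F k i)) • (sgn F i k • br x (br y α) + sgn F j i • br y (br α x)
          + sgn F k j • br α (br x y)) := by
      rw [h1, h2, h3]
      simp only [map_smul, map_neg, smul_neg, neg_smul, smul_smul, smul_add]
      match_scalars <;>
        (rcases zc i with rfl | rfl <;> rcases zc j with rfl | rfl <;>
          rcases zc k with rfl | rfl <;>
          norm_num [sgn, ZMod.val_add, ZMod.val_mul, ZMod.val_one,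
            show ((2 : ZMod 2)).val = 0 by decide])
    rw [hjac, smul_zero] at final
    exact sub_eq_zero.mp final
  constructor
  · intro i j x y hxa hxi hya hyj α hα
    rw [hI_graded] at hα
    obtain ⟨α0, hα0, α1, hα1, rfl⟩ := Submodule.mem_sup.mp hα
    have e0 := part1h i j 0 x y hxa hxi hya hyj α0 hα0.1 hα0.2
    have e1 := part1h i j 1 x y hxa hxi hya hyj α1 hα1.1 hα1.2
    simp only [map_add, LinearMap.add_apply, e0, e1, smul_add]
    abel
  · intro i d x α hxa hxi hα hαd y hya
    obtain ⟨heq, hbra, hlam, hmu⟩ := hcomp_a x hxa y hya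
    have h1 : br x α = -(sgn F i d) • br α x := hbr_skew i d x α hxi hαd
    have hlamo : B α (lam x y) = 0 := by
      have : lam x y ∈ orth B I := hIperp ▸ Submodule.mem_sup_left hlam
      exact this α hα
    have hmuo : B α (mu x y) = 0 := by
      have : mu x y ∈ orth B I := hIperp ▸ Submodule.mem_sup_right hmu
      exact this α hα
    have hcm : sgn F i d = sgn F d i := by rw [sgn, sgn, mul_comm]
    rw [h1]
    simp only [map_smul, map_neg, LinearMap.neg_apply, LinearMap.smul_apply,
      smul_eq_mul, neg_mul]
    rw [hB_inv α x y, heq]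
    simp [hlamo, hmuo, hcm]
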